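/- Let P = conv(S) + cone(R) with S, R ⊆ R^n finite and S nonempty. Then P⁺⁺ = conv(S ∪ {0}) + cone(R). -/

import Mathlib

open RealInnerProductSpace Pointwise

noncomputable def polarP {n : ℕ} (P : Set (EuclideanSpace ℝ (Fin n))) :
    Set (EuclideanSpace ℝ (Fin n)) :=
  {z | ∀ x ∈ P, 1 + ⟪z, x⟫ ≥ 0}

noncomputable def coneOf {n : ℕ} (R : Finset (EuclideanSpace ℝ (Fin n))) :
    Set (EuclideanSpace ℝ (Fin n)) :=
  {x | ∃ μ : EuclideanSpace ℝ (Fin n) → ℝ, (∀ r, 0 ≤ μ r) ∧ x = ∑ r ∈ R, μ r • r}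

section aux

variable {n : ℕ}

local notation "E" => EuclideanSpace ℝ (Fin n)

lemma zero_mem_coneOf (R : Finset E) : (0 : E) ∈ coneOf R :=
  ⟨0, fun _ => le_refl 0, by simp⟩

lemma mem_coneOf_self {R : Finset E} {r : E} (hr : r ∈ R) : r ∈ coneOf R := by
  classical
  refine ⟨fun r' => if r' = r then 1 else 0, fun r' => by dsimp only; split <;> norm_num, ?_⟩
  rw [show (∑ r' ∈ R, (if r' = r then (1:ℝ) else 0) • r') =
      ∑ r' ∈ R, (if r' = r then (1:ℝ) • r' else 0) by
    refine Finset.sum_congr rfl fun r' _ => ?_; split <;> simp]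
  rw [Finset.sum_ite_eq' R r (fun r' => (1:ℝ) • r')]
  simp [hr]

lemma add_mem_coneOf {R : Finset E} {a b : E} (ha : a ∈ coneOf R) (hb : b ∈ coneOf R) :
    a + b ∈ coneOf R := by
  obtain ⟨μ, hμ, rfl⟩ := ha
  obtain ⟨ν, hν, rfl⟩ := hb
  exact ⟨μ + ν, fun r => add_nonneg (hμ r) (hν r), by
    rw [← Finset.sum_add_distrib]; exact Finset.sum_congr rfl fun r _ => (add_smul _ _ _).symm⟩

lemma smul_mem_coneOf {R : Finset E} {a : E} {c : ℝ} (hc : 0 ≤ c) (ha : a ∈ coneOf R) :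
    c • a ∈ coneOf R := by
  obtain ⟨μ, hμ, rfl⟩ := ha
  exact ⟨fun r => c * μ r, fun r => mul_nonneg hc (hμ r), by
    rw [Finset.smul_sum]; exact Finset.sum_congr rfl fun r _ => (smul_smul _ _ _)⟩

lemma convex_coneOf (R : Finset E) : Convex ℝ (coneOf R) := by
  intro a ha b hb θ τ hθ hτ _
  exact add_mem_coneOf (smul_mem_coneOf hθ ha) (smul_mem_coneOf hτ hb)

lemma coneOf_subset {T R : Finset E} (hTR : T ⊆ R) : coneOf T ⊆ coneOf R := by
  classical
  rintro x ⟨μ, hμ, rfl⟩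
  refine ⟨fun r => if r ∈ T then μ r else 0, fun r => by dsimp only; split; exacts [hμ r, le_refl 0], ?_⟩
  rw [← Finset.sum_subset hTR (fun r _ hrT => by simp [hrT])]
  exact Finset.sum_congr rfl fun r hr => by simp [hr]


lemma carath_aux : ∀ N : ℕ, ∀ T : Finset E, T.card ≤ N → ∀ x ∈ coneOf T,
    ∃ T' : Finset E, T' ⊆ T ∧
      LinearIndependent ℝ (fun t : ((T' : Set E)) => (t : E)) ∧ x ∈ coneOf T' := by
  classical
  intro N
  induction N with
  | zero =>
    intro T hT x hx
    rw [Nat.le_zero, Finset.card_eq_zero] at hT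
    subst hT
    refine ⟨∅, subset_rfl, ?_, hx⟩
    rw [Finset.coe_empty]
    exact linearIndependent_empty ℝ E
  | succ N ih =>
    intro T hT x hx
    obtain ⟨μ, hμ0, rfl⟩ := hx
    set T' := T.filter (fun r => μ r ≠ 0) with hT'def
    have hT'T : T' ⊆ T := Finset.filter_subset _ _
    have hxT' : (∑ r ∈ T, μ r • r) ∈ coneOf T' := by
      refine ⟨fun r => if r ∈ T' then μ r else 0,
        fun r => by dsimp only; split; exacts [hμ0 r, le_refl 0], ?_⟩
      rw [← Finset.sum_subset hT'T (fun r hrT hrT' => by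
        have : μ r = 0 := by
          by_contra h
          exact hrT' (Finset.mem_filter.2 ⟨hrT, h⟩)
        simp [this])]
      exact Finset.sum_congr rfl fun r hr => by simp [hr]
    by_cases hli : LinearIndependent ℝ (fun t : ((T' : Set E)) => (t : E))
    · exact ⟨T', hT'T, hli, hxT'⟩
    -- extract a linear dependence supported on T'
    change ¬ LinearIndepOn ℝ id ((T' : Set E)) at hli
    rw [linearIndepOn_iff] at hli
    push_neg at hli
    obtain ⟨l, hlsupp, hlsum, hlne⟩ := hli
    have hlsupp' : ∀ r, l r ≠ 0 → r ∈ T' := by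
      intro r hr
      have := (Finsupp.mem_supported ℝ l).1 hlsupp (Finsupp.mem_support_iff.2 hr)
      simpa using this
    have hTsum : ∑ r ∈ T', l r • r = 0 := by
      rw [Finsupp.linearCombination_apply, Finsupp.sum] at hlsum
      rw [← hlsum]
      refine (Finset.sum_subset ?_ ?_).symm
      · intro r hr
        exact hlsupp' r (Finsupp.mem_support_iff.1 hr)
      · intro r _ hr
        simp [Finsupp.notMem_support_iff.1 hr]
    obtain ⟨r1, hr1⟩ : ∃ r, l r ≠ 0 := by
      by_contra h
      push_neg at h
      exact hlne (Finsupp.ext h)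
    have hr1T' : r1 ∈ T' := hlsupp' r1 hr1
    obtain ⟨c, hcsum, r2, hr2T', hr2pos⟩ :
        ∃ c : E → ℝ, (∑ r ∈ T', c r • r = 0) ∧ ∃ r ∈ T', 0 < c r := by
      rcases lt_or_gt_of_ne hr1 with h | h
      · refine ⟨fun r => -(l r), ?_, r1, hr1T', show (0:ℝ) < -(l r1) by linarith⟩
        rw [← neg_eq_zero, ← Finset.sum_neg_distrib]
        rw [← hTsum]
        exact Finset.sum_congr rfl fun r _ => by rw [neg_smul, neg_neg]
      · exact ⟨fun r => l r, hTsum, r1, hr1T', h⟩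
    set P := T'.filter (fun r => 0 < c r) with hPdef
    have hPne : P.Nonempty := ⟨r2, Finset.mem_filter.2 ⟨hr2T', hr2pos⟩⟩
    obtain ⟨r0, hr0P, hr0min⟩ := P.exists_min_image (fun r => μ r / c r) hPne
    have hr0T' : r0 ∈ T' := (Finset.mem_filter.1 hr0P).1
    have hr0c : 0 < c r0 := (Finset.mem_filter.1 hr0P).2
    have hr0μ : 0 ≤ μ r0 := hμ0 r0
    set t := μ r0 / c r0 with htdef
    have ht0 : 0 ≤ t := div_nonneg hr0μ hr0c.le
    set ν : E → ℝ := fun r => if r ∈ T'.erase r0 then μ r - t * c r else 0 with hνdef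
    have hν0 : ∀ r, 0 ≤ ν r := by
      intro r
      simp only [hνdef]
      split
      case isTrue hmem =>
        rcases le_or_gt (c r) 0 with hc | hc
        · nlinarith [hμ0 r, mul_nonpos_of_nonneg_of_nonpos ht0 hc]
        · have hrP : r ∈ P := Finset.mem_filter.2 ⟨Finset.mem_of_mem_erase hmem, hc⟩
          have := hr0min r hrP
          have : t * c r ≤ μ r := by
            rw [htdef]
            calc μ r0 / c r0 * c r ≤ μ r / c r * c r := by
                  apply mul_le_mul_of_nonneg_right this hc.le
              _ = μ r := div_mul_cancel₀ _ hc.ne'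
          linarith
      case isFalse => exact le_refl 0
    have hxe : (∑ r ∈ T, μ r • r) ∈ coneOf (T'.erase r0) := by
      refine ⟨ν, hν0, ?_⟩
      have h1 : ∑ r ∈ T'.erase r0, ν r • r = ∑ r ∈ T'.erase r0, (μ r - t * c r) • r :=
        Finset.sum_congr rfl fun r hr => by simp only [hνdef, if_pos hr]
      have h2 : ∑ r ∈ T'.erase r0, (μ r - t * c r) • r = ∑ r ∈ T', (μ r - t * c r) • r := by
        have hz : μ r0 - t * c r0 = 0 := by
          rw [htdef, div_mul_cancel₀ _ hr0c.ne']
          ring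
        rw [Finset.sum_erase_eq_sub hr0T', hz, zero_smul, sub_zero]
      have h3 : ∑ r ∈ T', (μ r - t * c r) • r
          = ∑ r ∈ T', μ r • r - t • ∑ r ∈ T', c r • r := by
        rw [Finset.smul_sum, ← Finset.sum_sub_distrib]
        exact Finset.sum_congr rfl fun r _ => by rw [sub_smul, smul_smul]
      have h4 : ∑ r ∈ T', μ r • r = ∑ r ∈ T, μ r • r := by
        refine Finset.sum_subset hT'T ?_
        intro r hrT hrT'
        have : μ r = 0 := by
          by_contra h
          exact hrT' (Finset.mem_filter.2 ⟨hrT, h⟩)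
        simp [this]
      rw [h1, h2, h3, hcsum, smul_zero, sub_zero, h4]
    have hcard : (T'.erase r0).card ≤ N := by
      have h1 : (T'.erase r0).card < T'.card := Finset.card_erase_lt_of_mem hr0T'
      have h2 : T'.card ≤ T.card := Finset.card_le_card hT'T
      omega
    obtain ⟨T'', hT''sub, hT''li, hT''mem⟩ := ih (T'.erase r0) hcard _ hxe
    exact ⟨T'', hT''sub.trans ((Finset.erase_subset _ _).trans hT'T), hT''li, hT''mem⟩


lemma isClosed_coneOf_of_li (T : Finset E)
    (hli : LinearIndependent ℝ (fun t : ((T : Set E)) => (t : E))) :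
    IsClosed (coneOf T) := by
  classical
  let L : ({x // x ∈ T} → ℝ) →ₗ[ℝ] E :=
    { toFun := fun μ => ∑ t : {x // x ∈ T}, μ t • (t : E)
      map_add' := fun a b => by
        rw [← Finset.sum_add_distrib]
        exact Finset.sum_congr rfl fun t _ => by rw [Pi.add_apply, add_smul]
      map_smul' := fun c a => by
        rw [RingHom.id_apply, Finset.smul_sum]
        exact Finset.sum_congr rfl fun t _ => by rw [Pi.smul_apply, smul_smul]; rfl }
  have hli' : LinearIndependent ℝ (fun t : {x // x ∈ T} => (t : E)) := by
    exact hli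
  have hinj : Function.Injective L := by
    intro a b hab
    have h0 : L (a - b) = 0 := by rw [map_sub, hab, sub_self]
    have : ∀ t, (a - b) t = 0 := by
      apply Fintype.linearIndependent_iff.mp hli' (a - b)
      exact h0
    funext t
    have := this t
    rw [Pi.sub_apply] at this
    linarith
  have horth : IsClosed {μ : {x // x ∈ T} → ℝ | ∀ t, 0 ≤ μ t} := by
    have : {μ : {x // x ∈ T} → ℝ | ∀ t, 0 ≤ μ t}
        = Set.pi Set.univ (fun _ => Set.Ici (0:ℝ)) := by
      ext μ
      constructor
      · intro h t _
        exact h t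
      · intro h t
        exact h t trivial
    rw [this]
    exact isClosed_set_pi fun i _ => isClosed_Ici
  have himg : coneOf T = L '' {μ | ∀ t, 0 ≤ μ t} := by
    ext x
    constructor
    · rintro ⟨μ, hμ, rfl⟩
      refine ⟨fun t => μ t, fun t => hμ t, ?_⟩
      show (∑ t : {x // x ∈ T}, μ (t : E) • (t : E)) = ∑ r ∈ T, μ r • r
      exact Finset.sum_coe_sort T (fun r => μ r • r)
    · rintro ⟨μ, hμ, rfl⟩
      refine ⟨fun r => if h : r ∈ T then μ ⟨r, h⟩ else 0,
        fun r => by dsimp only; split; exacts [hμ _, le_refl 0], ?_⟩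
      show L μ = _
      rw [show (∑ r ∈ T, (if h : r ∈ T then μ ⟨r, h⟩ else 0) • r)
          = ∑ r ∈ T.attach, (if h : (r : E) ∈ T then μ ⟨r, h⟩ else 0) • (r : E) from
        (Finset.sum_attach T _).symm]
      rw [show L μ = ∑ t ∈ Finset.univ, μ t • (t : E) from rfl]
      rw [show (Finset.univ : Finset {x // x ∈ T}) = T.attach from rfl]
      exact Finset.sum_congr rfl fun t _ => by rw [dif_pos t.2]
  rw [himg]
  exact (L.isClosedEmbedding_of_injective (LinearMap.ker_eq_bot.2 hinj)).isClosedMap _ horth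

lemma isClosed_coneOf (R : Finset E) : IsClosed (coneOf R) := by
  classical
  have hcover : coneOf R = ⋃ T ∈ R.powerset,
      (if LinearIndependent ℝ (fun t : ((T : Set E)) => (t : E)) then coneOf T else {0}) := by
    ext x
    constructor
    · intro hx
      obtain ⟨T', hT'R, hli, hxT'⟩ := carath_aux R.card R le_rfl x hx
      refine Set.mem_biUnion (Finset.mem_powerset.2 hT'R) ?_
      rw [if_pos hli]
      exact hxT'
    · intro hx
      obtain ⟨T, hT, hxT⟩ := Set.mem_iUnion₂.1 hx
      split at hxT
      · exact coneOf_subset (Finset.mem_powerset.1 hT) hxT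
      · rw [Set.mem_singleton_iff] at hxT
        rw [hxT]
        exact zero_mem_coneOf R
  rw [hcover]
  refine Set.Finite.isClosed_biUnion (R.powerset.finite_toSet) fun T _ => ?_
  split
  case isTrue h => exact isClosed_coneOf_of_li T h
  case isFalse => exact isClosed_singleton

end aux

theorem stmt16 {n : ℕ} (S R : Finset (EuclideanSpace ℝ (Fin n))) (hS : S.Nonempty) :
    polarP (polarP (convexHull ℝ (S : Set (EuclideanSpace ℝ (Fin n))) + coneOf R)) =
      convexHull ℝ ((S : Set (EuclideanSpace ℝ (Fin n))) ∪ {0}) + coneOf R := by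
  classical
  set P : Set (EuclideanSpace ℝ (Fin n)) :=
    convexHull ℝ (S : Set (EuclideanSpace ℝ (Fin n))) + coneOf R with hPdef
  set Q : Set (EuclideanSpace ℝ (Fin n)) :=
    convexHull ℝ ((S : Set (EuclideanSpace ℝ (Fin n))) ∪ {0}) + coneOf R with hQdef
  have hSP : ∀ s ∈ S, (s : EuclideanSpace ℝ (Fin n)) ∈ P := by
    intro s hs
    have := Set.add_mem_add
      (subset_convexHull ℝ (S : Set (EuclideanSpace ℝ (Fin n))) hs) (zero_mem_coneOf R)
    simpa using this
  have hPQ : P ⊆ Q :=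
    Set.add_subset_add_right (convexHull_mono Set.subset_union_left)
  have h0Q : (0 : EuclideanSpace ℝ (Fin n)) ∈ Q := by
    have := Set.add_mem_add
      (subset_convexHull ℝ ((S : Set (EuclideanSpace ℝ (Fin n))) ∪ {0}) (Or.inr rfl))
      (zero_mem_coneOf R)
    rw [add_zero] at this
    exact this
  apply Set.Subset.antisymm
  · -- hard direction: P⁺⁺ ⊆ Q, by separation
    intro y hy
    by_contra hyQ
    have hQconv : Convex ℝ Q :=
      (convex_convexHull ℝ _).add (convex_coneOf R)
    have hQclosed : IsClosed Q := by
      have hfin : ((S : Set (EuclideanSpace ℝ (Fin n))) ∪ {0}).Finite :=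
        S.finite_toSet.union (Set.finite_singleton 0)
      exact (isClosed_coneOf R).add_left_of_isCompact (hfin.isCompact_convexHull ℝ)
    obtain ⟨f, u, hfa, hfy⟩ := geometric_hahn_banach_closed_point hQconv hQclosed hyQ
    have hu : 0 < u := by
      have := hfa 0 h0Q
      simpa using this
    set z : EuclideanSpace ℝ (Fin n) :=
      (InnerProductSpace.toDual ℝ (EuclideanSpace ℝ (Fin n))).symm f with hzdef
    have hzf : ∀ x : EuclideanSpace ℝ (Fin n), ⟪z, x⟫ = f x := fun x =>
      InnerProductSpace.toDual_symm_apply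
    set z' : EuclideanSpace ℝ (Fin n) := (-u⁻¹) • z with hz'def
    have hz'P : z' ∈ polarP P := by
      intro x hxP
      have hfx : f x < u := hfa x (hPQ hxP)
      have hinner : ⟪z', x⟫ = (-u⁻¹) * f x := by
        rw [hz'def, real_inner_smul_left, hzf]
      rw [ge_iff_le, hinner]
      nlinarith [mul_pos (inv_pos.2 hu) (sub_pos.2 hfx), mul_inv_cancel₀ hu.ne']
    have hkey := hy z' hz'P
    have hzy : ⟪y, z'⟫ = (-u⁻¹) * f y := by
      rw [real_inner_comm, hz'def, real_inner_smul_left, hzf]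
    rw [ge_iff_le, hzy] at hkey
    nlinarith [mul_pos (inv_pos.2 hu) (sub_pos.2 hfy), mul_inv_cancel₀ hu.ne']
  · -- easy direction: Q ⊆ P⁺⁺
    rintro x ⟨a, ha, c, hc, rfl⟩
    intro w hw
    rw [ge_iff_le, real_inner_comm, inner_add_right]
    obtain ⟨s0, hs0⟩ := hS
    have hs0P : (s0 : EuclideanSpace ℝ (Fin n)) ∈ P := hSP s0 hs0
    have hs0w : 0 ≤ 1 + ⟪w, (s0 : EuclideanSpace ℝ (Fin n))⟫ := hw _ hs0P
    have hwr : ∀ r ∈ R, 0 ≤ ⟪w, r⟫ := by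
      intro r hr
      by_contra hneg
      push_neg at hneg
      set t : ℝ := (2 + ⟪w, (s0 : EuclideanSpace ℝ (Fin n))⟫) / (-⟪w, r⟫) with htdef
      have hwrpos : 0 < -⟪w, r⟫ := by linarith
      have ht0 : 0 ≤ t := div_nonneg (by linarith) hwrpos.le
      have hmem : (s0 : EuclideanSpace ℝ (Fin n)) + t • r ∈ P :=
        Set.add_mem_add (subset_convexHull ℝ (S : Set (EuclideanSpace ℝ (Fin n))) hs0)
          (smul_mem_coneOf ht0 (mem_coneOf_self hr))
      have hineq := hw _ hmem
      rw [ge_iff_le, inner_add_right, real_inner_smul_right] at hineq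
      have htval : t * ⟪w, r⟫ = -(2 + ⟪w, (s0 : EuclideanSpace ℝ (Fin n))⟫) := by
        have hBne : ⟪w, (r : EuclideanSpace ℝ (Fin n))⟫ ≠ 0 := ne_of_lt hneg
        rw [htdef, div_mul_eq_mul_div, div_neg, mul_div_assoc, div_self hBne, mul_one]
      rw [htval] at hineq
      linarith
    have hwc : 0 ≤ ⟪w, c⟫ := by
      obtain ⟨μ, hμ, rfl⟩ := hc
      rw [inner_sum]
      refine Finset.sum_nonneg fun r hr => ?_
      rw [real_inner_smul_right]
      exact mul_nonneg (hμ r) (hwr r hr)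
    have hwa : 0 ≤ 1 + ⟪w, a⟫ := by
      have hsub : convexHull ℝ ((S : Set (EuclideanSpace ℝ (Fin n))) ∪ {0})
          ⊆ {v : EuclideanSpace ℝ (Fin n) | 0 ≤ 1 + ⟪w, v⟫} := by
        apply convexHull_min
        · rintro v (hv | hv)
          · exact hw _ (hSP v hv)
          · rw [Set.mem_singleton_iff] at hv
            subst hv
            rw [Set.mem_setOf_eq, inner_zero_right]
            norm_num
        · intro v1 hv1 v2 hv2 θ τ hθ hτ hθτ
          rw [Set.mem_setOf_eq] at hv1 hv2 ⊢
          have hexp : ⟪w, θ • v1 + τ • v2⟫ = θ * ⟪w, v1⟫ + τ * ⟪w, v2⟫ := by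
            rw [inner_add_right, real_inner_smul_right, real_inner_smul_right]
          rw [hexp]
          nlinarith [mul_nonneg hθ hv1, mul_nonneg hτ hv2]
      exact hsub ha
    linarith
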